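/- arXiv:1308.3370 — 2 statements merged into one kernel-verified Lean document; each statement's English description precedes it below -/
import Mathlib

section
/- Let v₁, …, v_k ∈ ℝ² (k ≥ 3) be in strictly convex position listed in cyclic order, and let 1 ≤ i < j ≤ k. Let x ∈ ℝ² be a point such that for every f with i ≤ f ≤ j−1, x lies strictly on the open side of the line through v_f and v_{f+1} that does not contain the points v_g, g ∉ {f, f+1}. Then for every f with i ≤ f ≤ j, the segment [x, v_f] intersects the convex hull conv{v₁, …, v_k} exactly in the single point v_f. -/
/-- Points of the Euclidean plane. -/
abbrev Pt := EuclideanSpace ℝ (Fin 2)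

/-- The points `v 0, …, v (k-1)` are in strictly convex position, listed in cyclic order:
for each index `i`, all points `v f` with `f ∉ {i, i+1}` (indices mod `k`) lie strictly on
one and the same open side of the line through `v i` and `v (i+1)`. -/
def StrictConvexCyclic {k : ℕ} (v : Fin k → Pt) : Prop :=
  ∀ i : Fin k, ∃ n : Pt,
    (inner ℝ n (v ⟨((i : ℕ) + 1) % k, Nat.mod_lt _ i.pos⟩ - v i) : ℝ) = 0 ∧
    ∀ f : Fin k, (f : ℕ) ≠ (i : ℕ) → (f : ℕ) ≠ ((i : ℕ) + 1) % k →
      (inner ℝ n (v f - v i) : ℝ) < 0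

/-- If `n` is a functional supporting the set `S` at `a ∈ S` and `x` lies strictly on the
other side, then the segment `[x, a]` meets the convex hull of `S` only in `a`. -/
lemma sep_segment_hull (n a x : Pt) (S : Set Pt)
    (hS : ∀ p ∈ S, (inner ℝ n (p - a) : ℝ) ≤ 0)
    (hx : 0 < (inner ℝ n (x - a) : ℝ)) (ha : a ∈ S) :
    segment ℝ x a ∩ convexHull ℝ S = {a} := by
  have hlin : IsLinearMap ℝ (fun p : Pt => (inner ℝ n p : ℝ)) :=
    ⟨fun a b => inner_add_right _ _ _, fun c y => real_inner_smul_right _ _ _⟩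
  have hhalf : convexHull ℝ S ⊆ {p : Pt | (inner ℝ n p : ℝ) ≤ (inner ℝ n a : ℝ)} := by
    apply convexHull_min ?_ (convex_halfSpace_le hlin _)
    intro p hp
    have := hS p hp
    rw [inner_sub_right] at this
    simpa using this
  ext p
  constructor
  · rintro ⟨hseg, hhull⟩
    obtain ⟨t, s, ht, hs, hts, rfl⟩ := hseg
    have h1 : (inner ℝ n (t • x + s • a) : ℝ) ≤ inner ℝ n a := hhalf hhull
    have h2 : (inner ℝ n (t • x + s • a) : ℝ) = t * (inner ℝ n x) + s * (inner ℝ n a) := by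
      rw [inner_add_right, real_inner_smul_right, real_inner_smul_right]
    have hxa : (inner ℝ n (x - a) : ℝ) = inner ℝ n x - inner ℝ n a := inner_sub_right _ _ _
    have ht0 : t = 0 := by
      by_contra h
      have htp : 0 < t := lt_of_le_of_ne ht (Ne.symm h)
      have hp := mul_pos htp hx
      rw [hxa, mul_sub] at hp
      have hsA : s * (inner ℝ n a : ℝ) = inner ℝ n a - t * inner ℝ n a := by
        have hs' : s = 1 - t := by linarith
        rw [hs']; ring
      linarith [h1, h2]
    have hs1 : s = 1 := by linarith
    simp [ht0, hs1]
  · rintro rfl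
    exact ⟨right_mem_segment _ _ _, subset_convexHull ℝ S ha⟩

/-- indices written 0-based: `i < j ≤ k-1`: if a point `x` lies, for every
`f` with `i ≤ f ≤ j-1`, strictly on the open side of the line through `v f` and `v (f+1)`
not containing the remaining vertices, then for every `f` with `i ≤ f ≤ j` the segment
`[x, v f]` meets the convex hull of the vertices exactly in the single point `v f`. -/
theorem statement_2 {k : ℕ} (hk : 3 ≤ k) (v : Fin k → Pt)
    (hv : StrictConvexCyclic v) (i j : ℕ) (hij : i < j) (hj : j < k) (x : Pt)
    (hx : ∀ f : ℕ, ∀ _hf1 : i ≤ f, ∀ _hf2 : f < j, ∃ n : Pt,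
      (inner ℝ n (v ⟨f + 1, by omega⟩ - v ⟨f, by omega⟩) : ℝ) = 0 ∧
      (∀ g : Fin k, (g : ℕ) ≠ f → (g : ℕ) ≠ f + 1 →
        (inner ℝ n (v g - v ⟨f, by omega⟩) : ℝ) < 0) ∧
      0 < (inner ℝ n (x - v ⟨f, by omega⟩) : ℝ)) :
    ∀ f : ℕ, ∀ _hf1 : i ≤ f, ∀ _hf2 : f ≤ j,
      segment ℝ x (v ⟨f, by omega⟩) ∩ convexHull ℝ (Set.range v) = {v ⟨f, by omega⟩} := by
  intro f hf1 hf2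
  -- It suffices to find a separating functional n at v f
  suffices h : ∃ n : Pt, (∀ p ∈ Set.range v, (inner ℝ n (p - v ⟨f, by omega⟩) : ℝ) ≤ 0) ∧
      0 < (inner ℝ n (x - v ⟨f, by omega⟩) : ℝ) by
    obtain ⟨n, hS, hxn⟩ := h
    exact sep_segment_hull n (v ⟨f, by omega⟩) x _ hS hxn ⟨⟨f, by omega⟩, rfl⟩
  rcases lt_or_eq_of_le hf2 with hlt | rfl
  · obtain ⟨n, h0, hneg, hpos⟩ := hx f hf1 hlt
    refine ⟨n, ?_, hpos⟩
    rintro p ⟨g, rfl⟩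
    rcases eq_or_ne (g : ℕ) f with hg | hg
    · have : g = ⟨f, by omega⟩ := Fin.ext hg
      simp [this]
    rcases eq_or_ne (g : ℕ) (f + 1) with hg1 | hg1
    · have : g = ⟨f + 1, by omega⟩ := Fin.ext hg1
      rw [this]; exact le_of_eq h0
    · exact le_of_lt (hneg g hg hg1)
  · obtain ⟨n, h0, hneg, hpos⟩ := hx (f - 1) (by omega) (by omega)
    have hfe : (⟨f - 1 + 1, by omega⟩ : Fin k) = ⟨f, by omega⟩ := Fin.ext (show f - 1 + 1 = f by omega)
    rw [hfe] at h0
    have key : ∀ y : Pt, (inner ℝ n (y - v ⟨f, by omega⟩) : ℝ)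
        = inner ℝ n (y - v ⟨f - 1, by omega⟩) - inner ℝ n (v ⟨f, by omega⟩ - v ⟨f - 1, by omega⟩) := by
      intro y
      rw [← inner_sub_right]
      congr 1
      abel
    refine ⟨n, ?_, ?_⟩
    · rintro p ⟨g, rfl⟩
      rw [key, h0, sub_zero]
      rcases eq_or_ne (g : ℕ) (f - 1) with hg | hg
      · have : g = ⟨f - 1, by omega⟩ := Fin.ext hg
        simp [this]
      rcases eq_or_ne (g : ℕ) (f - 1 + 1) with hg1 | hg1
      · have : g = ⟨f, by omega⟩ := Fin.ext (show (g : ℕ) = f by omega)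
        rw [this]; exact le_of_eq h0
      · exact le_of_lt (hneg g hg hg1)
    · rw [key, h0, sub_zero]; exact hpos
end

section
/- Let v₁, …, v_k ∈ ℝ² (k ≥ 3) be in strictly convex position listed in cyclic order. For an index f call a vector n_f ∈ ℝ² an outward normal of the edge (v_f, v_{f+1}) if ⟨n_f, v_g − v_f⟩ < 0 for every g ∉ {f, f+1} and ⟨n_f, v_{f+1} − v_f⟩ = 0. Let 1 ≤ i ≤ f ≤ j−1 ≤ k−1, let n_i, n_f, n_{j−1} be outward normals of the edges (v_i, v_{i+1}), (v_f, v_{f+1}), (v_{j−1}, v_j) respectively, and suppose n_f = α·n_i + β·n_{j−1} for some reals α, β ≥ 0. Then every point x ∈ ℝ² with ⟨n_i, x − v_i⟩ > 0 and ⟨n_{j−1}, x − v_{j−1}⟩ > 0 also satisfies ⟨n_f, x − v_f⟩ > 0. -/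
/-- `n` is an outward normal of the edge `(v f, v (f+1))`: it is orthogonal to the edge and
`⟨n, v g − v f⟩ < 0` for every vertex `v g` with `g ∉ {f, f+1}`. -/
def IsOutwardNormal {k : ℕ} (v : Fin k → Pt) (f : ℕ) (hf : f + 1 < k) (n : Pt) : Prop :=
  (inner ℝ n (v ⟨f + 1, hf⟩ - v ⟨f, by omega⟩) : ℝ) = 0 ∧
  ∀ g : Fin k, (g : ℕ) ≠ f → (g : ℕ) ≠ f + 1 →
    (inner ℝ n (v g - v ⟨f, by omega⟩) : ℝ) < 0

/-- indices written 0-based: with `g = j - 1`, the three edges are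
`(v i, v (i+1))`, `(v f, v (f+1))` and `(v g, v (g+1))`, where `i ≤ f ≤ g` and `g + 1 ≤ k - 1`:
if the outward normal `n_f` of an intermediate edge is a nonnegative combination of the outward
normals `n_i` and `n_g` of the two extreme edges, then every point `x` lying strictly beyond
both extreme edges also lies strictly beyond the intermediate edge. -/
theorem statement_3 {k : ℕ} (hk : 3 ≤ k) (v : Fin k → Pt) (hv : StrictConvexCyclic v)
    (i f g : ℕ) (hif : i ≤ f) (hfg : f ≤ g) (hg : g + 1 < k)
    (ni nf ng : Pt)
    (hni : IsOutwardNormal v i (by omega) ni)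
    (hnf : IsOutwardNormal v f (by omega) nf)
    (hng : IsOutwardNormal v g hg ng)
    (α β : ℝ) (hα : 0 ≤ α) (hβ : 0 ≤ β) (hcomb : nf = α • ni + β • ng) :
    ∀ x : Pt, 0 < (inner ℝ ni (x - v ⟨i, by omega⟩) : ℝ) →
      0 < (inner ℝ ng (x - v ⟨g, by omega⟩) : ℝ) →
      0 < (inner ℝ nf (x - v ⟨f, by omega⟩) : ℝ) := by
  intro x hxi hxg
  have hfk : f < k := by omega
  -- ⟨ni, v f - v i⟩ ≤ 0
  have h1 : (inner ℝ ni (v ⟨f, hfk⟩ - v ⟨i, by omega⟩) : ℝ) ≤ 0 := by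
    rcases eq_or_lt_of_le hif with h | h
    · subst h; simp
    · rcases Nat.eq_or_lt_of_le (Nat.succ_le_of_lt h) with h2 | h2
      · have hval : i + 1 = f := by omega
        have heq : (⟨i + 1, by omega⟩ : Fin k) = (⟨f, hfk⟩ : Fin k) := by
          simp [Fin.ext_iff, hval]
        have h0 := hni.1
        rw [heq] at h0
        exact le_of_eq h0
      · exact le_of_lt (hni.2 ⟨f, hfk⟩ (by simp; omega) (by simp; omega))
  -- ⟨ng, v f - v g⟩ ≤ 0
  have h2 : (inner ℝ ng (v ⟨f, hfk⟩ - v ⟨g, by omega⟩) : ℝ) ≤ 0 := by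
    rcases eq_or_lt_of_le hfg with h | h
    · have : (⟨f, hfk⟩ : Fin k) = ⟨g, by omega⟩ := by ext; exact h
      rw [this]; simp
    · exact le_of_lt (hng.2 ⟨f, hfk⟩ (by simp; omega) (by simp; omega))
  -- positivity of the two translated inner ℝ products
  have hpi : 0 < (inner ℝ ni (x - v ⟨f, hfk⟩) : ℝ) := by
    have : (inner ℝ ni (x - v ⟨f, hfk⟩) : ℝ)
        = inner ℝ ni (x - v ⟨i, by omega⟩) - inner ℝ ni (v ⟨f, hfk⟩ - v ⟨i, by omega⟩) := by
      rw [← inner_sub_right]; congr 1; abel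
    rw [this]; linarith
  have hpg : 0 < (inner ℝ ng (x - v ⟨f, hfk⟩) : ℝ) := by
    have : (inner ℝ ng (x - v ⟨f, hfk⟩) : ℝ)
        = inner ℝ ng (x - v ⟨g, by omega⟩) - inner ℝ ng (v ⟨f, hfk⟩ - v ⟨g, by omega⟩) := by
      rw [← inner_sub_right]; congr 1; abel
    rw [this]; linarith
  -- nf ≠ 0, hence α + β > 0
  have hnf0 : nf ≠ 0 := by
    intro h
    have hw : (f + 2) % k ≠ f ∧ (f + 2) % k ≠ f + 1 := by
      rcases Nat.lt_or_ge (f + 2) k with hlt | hge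
      · rw [Nat.mod_eq_of_lt hlt]; omega
      · have : f + 2 = k := by omega
        rw [this, Nat.mod_self]; omega
    have := hnf.2 ⟨(f + 2) % k, Nat.mod_lt _ (by omega)⟩ hw.1 hw.2
    rw [h, inner_zero_left] at this
    exact lt_irrefl 0 this
  have hcases : 0 < α ∨ 0 < β := by
    by_contra hc
    push_neg at hc
    have hα0 : α = 0 := le_antisymm hc.1 hα
    have hβ0 : β = 0 := le_antisymm hc.2 hβ
    apply hnf0
    rw [hcomb, hα0, hβ0]; simp
  have hexp : (inner ℝ nf (x - v ⟨f, hfk⟩) : ℝ)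
      = α * inner ℝ ni (x - v ⟨f, hfk⟩) + β * inner ℝ ng (x - v ⟨f, hfk⟩) := by
    rw [hcomb, inner_add_left, real_inner_smul_left, real_inner_smul_left]
  rw [hexp]
  rcases hcases with h | h
  · nlinarith [mul_nonneg hβ (le_of_lt hpg)]
  · nlinarith [mul_nonneg hα (le_of_lt hpi)]
end
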